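/- For all real numbers a, b, m and all s > 0, the integral of x ↦ erf(a·x + b) against the Gaussian measure on ℝ with mean m and variance s² equals erf( (a·m + b) / √(1 + 2·a²·s²) ). -/

import Mathlib

open MeasureTheory ProbabilityTheory Real
open scoped ENNReal NNReal

/-- The error function `erf x = (2/√π) ∫₀ˣ e^{-t²} dt`. -/
noncomputable def erf (x : ℝ) : ℝ := 2 / Real.sqrt Real.pi * ∫ t in (0:ℝ)..x, Real.exp (-t ^ 2)

lemma cont_exp_neg_sq : Continuous fun t : ℝ => Real.exp (-t ^ 2) := by continuity

lemma erf_hasDerivAt (x : ℝ) :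
    HasDerivAt erf (2 / Real.sqrt Real.pi * Real.exp (-x ^ 2)) x := by
  have h : HasDerivAt (fun y : ℝ => ∫ t in (0:ℝ)..y, Real.exp (-t ^ 2))
      (Real.exp (-x ^ 2)) x :=
    intervalIntegral.integral_hasDerivAt_right
      (cont_exp_neg_sq.intervalIntegrable 0 x)
      (cont_exp_neg_sq.stronglyMeasurableAtFilter _ _)
      cont_exp_neg_sq.continuousAt
  exact h.const_mul _

lemma erf_continuous : Continuous erf :=
  Differentiable.continuous fun x => (erf_hasDerivAt x).differentiableAt

lemma erf_zero : erf 0 = 0 := by simp [erf]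

lemma erf_neg (x : ℝ) : erf (-x) = - erf x := by
  have h : (∫ t in (0:ℝ)..(-x), Real.exp (-t ^ 2))
      = ∫ t in x..(0:ℝ), Real.exp (-t ^ 2) := by
    have := intervalIntegral.integral_comp_neg (a := (0:ℝ)) (b := -x)
      (fun t => Real.exp (-t ^ 2))
    simpa using this
  simp only [erf, h, intervalIntegral.integral_symm (0:ℝ) x]
  ring

lemma abs_erf_le_one (x : ℝ) : |erf x| ≤ 1 := by
  have key : ∀ y : ℝ, 0 ≤ y → 0 ≤ erf y ∧ erf y ≤ 1 := by
    intro y hy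
    have hint : IntegrableOn (fun t : ℝ => Real.exp (-t ^ 2)) (Set.Ioi 0) := by
      have := integrable_exp_neg_mul_sq (b := 1) one_pos
      simpa using this.integrableOn
    have h1 : (∫ t in (0:ℝ)..y, Real.exp (-t ^ 2))
        = ∫ t in Set.Ioc 0 y, Real.exp (-t ^ 2) :=
      intervalIntegral.integral_of_le hy
    have h2 : (∫ t in Set.Ioc 0 y, Real.exp (-t ^ 2))
        ≤ ∫ t in Set.Ioi 0, Real.exp (-t ^ 2) := by
      refine setIntegral_mono_set hint ?_ ?_
      · exact Filter.Eventually.of_forall fun t => (Real.exp_pos _).le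
      · exact Filter.Eventually.of_forall fun t ht => ht.1
    have h3 : (∫ t in Set.Ioi (0:ℝ), Real.exp (-t ^ 2)) = Real.sqrt Real.pi / 2 := by
      have := integral_gaussian_Ioi 1
      simpa using this
    have hnn : 0 ≤ ∫ t in (0:ℝ)..y, Real.exp (-t ^ 2) :=
      intervalIntegral.integral_nonneg hy fun t _ => (Real.exp_pos _).le
    have hpos : 0 < Real.sqrt Real.pi := Real.sqrt_pos.mpr Real.pi_pos
    constructor
    · exact mul_nonneg (by positivity) hnn
    · have : erf y ≤ 2 / Real.sqrt Real.pi * (Real.sqrt Real.pi / 2) := by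
        refine mul_le_mul_of_nonneg_left ?_ (by positivity)
        rw [h1]; rw [← h3]; exact h2
      calc erf y ≤ 2 / Real.sqrt Real.pi * (Real.sqrt Real.pi / 2) := this
        _ = 1 := by field_simp
  rcases le_or_gt 0 x with hx | hx
  · have := key x hx
    rw [abs_le]; constructor <;> linarith [this.1, this.2]
  · have := key (-x) (by linarith)
    rw [erf_neg] at this
    rw [abs_le]; constructor <;> linarith [this.1, this.2]

lemma exp_combine (c d u : ℝ) :
    (Real.sqrt (2 * Real.pi))⁻¹ * Real.exp (-u ^ 2 / 2) * Real.exp (-(c * u + d) ^ 2)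
      = ((Real.sqrt (2 * Real.pi))⁻¹ * Real.exp (-d ^ 2 / (1 + 2 * c ^ 2))) *
        Real.exp (-((1 + 2 * c ^ 2) / 2) * (u + 2 * c * d / (1 + 2 * c ^ 2)) ^ 2) := by
  have hk : (0:ℝ) < 1 + 2 * c ^ 2 := by positivity
  rw [mul_assoc, mul_assoc, ← Real.exp_add, ← Real.exp_add]
  congr 2
  field_simp
  ring

/-- The key Gaussian integral. -/
lemma gauss_int (c d : ℝ) :
    ∫ u, Real.exp (-(c * u + d) ^ 2) ∂(gaussianReal 0 1)
      = Real.exp (-d ^ 2 / (1 + 2 * c ^ 2)) / Real.sqrt (1 + 2 * c ^ 2) := by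
  have hk : (0:ℝ) < 1 + 2 * c ^ 2 := by positivity
  rw [gaussianReal_of_var_ne_zero 0 one_ne_zero]
  have hmeas : Measurable fun x : ℝ => Real.toNNReal (gaussianPDFReal 0 1 x) :=
    (measurable_gaussianPDFReal 0 1).real_toNNReal
  rw [show gaussianPDF 0 1 = fun x => (Real.toNNReal (gaussianPDFReal 0 1 x) : ℝ≥0∞) from rfl]
  rw [integral_withDensity_eq_integral_smul hmeas]
  have hpdf : ∀ u : ℝ, (Real.toNNReal (gaussianPDFReal 0 1 u) : ℝ)
      = (Real.sqrt (2 * Real.pi))⁻¹ * Real.exp (-u ^ 2 / 2) := by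
    intro u
    rw [Real.coe_toNNReal _ (gaussianPDFReal_nonneg 0 1 u)]
    simp [gaussianPDFReal]
  have : ∀ u : ℝ, Real.toNNReal (gaussianPDFReal 0 1 u) • Real.exp (-(c * u + d) ^ 2)
      = ((Real.sqrt (2 * Real.pi))⁻¹ * Real.exp (-d ^ 2 / (1 + 2 * c ^ 2))) *
        Real.exp (-((1 + 2 * c ^ 2) / 2) * (u + 2 * c * d / (1 + 2 * c ^ 2)) ^ 2) := by
    intro u
    rw [NNReal.smul_def, smul_eq_mul, hpdf u, exp_combine]
  simp_rw [this]
  rw [integral_const_mul]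
  have htrans : ∫ u : ℝ, Real.exp (-((1 + 2 * c ^ 2) / 2) *
      (u + 2 * c * d / (1 + 2 * c ^ 2)) ^ 2)
      = ∫ u : ℝ, Real.exp (-((1 + 2 * c ^ 2) / 2) * u ^ 2) :=
    integral_add_right_eq_self (fun u => Real.exp (-((1 + 2 * c ^ 2) / 2) * u ^ 2))
      (2 * c * d / (1 + 2 * c ^ 2))
  rw [htrans, integral_gaussian]
  have h1 : Real.pi / ((1 + 2 * c ^ 2) / 2) = 2 * Real.pi / (1 + 2 * c ^ 2) := by
    field_simp
  rw [h1, Real.sqrt_div (by positivity : (0:ℝ) ≤ 2 * Real.pi)]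
  have h2 : Real.sqrt (2 * Real.pi) ≠ 0 := by positivity
  have h3 : Real.sqrt (1 + 2 * c ^ 2) ≠ 0 := by positivity
  field_simp

lemma erf_aux_cont (c d : ℝ) : Continuous fun u : ℝ => erf (c * u + d) :=
  erf_continuous.comp (by continuity)

lemma erf_integrable (c d : ℝ) :
    Integrable (fun u => erf (c * u + d)) (gaussianReal 0 1) := by
  refine (integrable_const (1:ℝ)).mono' (erf_aux_cont c d).aestronglyMeasurable ?_
  exact Filter.Eventually.of_forall fun u => by
    simpa [Real.norm_eq_abs] using abs_erf_le_one (c * u + d)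

lemma key_deriv (c d₀ : ℝ) :
    HasDerivAt (fun d => ∫ u, erf (c * u + d) ∂(gaussianReal 0 1))
      (2 / Real.sqrt Real.pi *
        (Real.exp (-d₀ ^ 2 / (1 + 2 * c ^ 2)) / Real.sqrt (1 + 2 * c ^ 2))) d₀ := by
  have hπ : (0:ℝ) ≤ 2 / Real.sqrt Real.pi := by positivity
  have h := hasDerivAt_integral_of_dominated_loc_of_deriv_le (μ := gaussianReal 0 1)
    (F := fun d u => erf (c * u + d))
    (F' := fun d u => 2 / Real.sqrt Real.pi * Real.exp (-(c * u + d) ^ 2))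
    (x₀ := d₀) (bound := fun _ => 2 / Real.sqrt Real.pi) (s := Set.univ) Filter.univ_mem
    (Filter.Eventually.of_forall fun x => (erf_aux_cont c x).aestronglyMeasurable)
    (erf_integrable c d₀)
    (Continuous.aestronglyMeasurable (by continuity))
    (Filter.Eventually.of_forall fun u x _ => by
      rw [Real.norm_eq_abs, abs_mul, abs_of_nonneg hπ,
        abs_of_pos (Real.exp_pos _)]
      have : Real.exp (-(c * u + x) ^ 2) ≤ 1 := by
        rw [Real.exp_le_one_iff]
        nlinarith [sq_nonneg (c * u + x)]
      nlinarith)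
    (integrable_const _)
    (Filter.Eventually.of_forall fun u x _ => by
      have := (erf_hasDerivAt (c * u + x)).comp x ((hasDerivAt_id x).const_add (c * u))
      simpa [Function.comp_def] using this)
  have h2 := h.2
  have h3 : (∫ u, 2 / Real.sqrt Real.pi * Real.exp (-(c * u + d₀) ^ 2)
      ∂(gaussianReal 0 1))
      = 2 / Real.sqrt Real.pi *
        (Real.exp (-d₀ ^ 2 / (1 + 2 * c ^ 2)) / Real.sqrt (1 + 2 * c ^ 2)) := by
    rw [integral_const_mul, gauss_int]
  rwa [h3] at h2

lemma key_zero (c : ℝ) : ∫ u, erf (c * u + 0) ∂(gaussianReal 0 1) = 0 := by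
  have hone : NNReal.mk ((-1:ℝ) ^ 2) (sq_nonneg _) * 1 = 1 := by
    ext; norm_num
  have hmap : (gaussianReal 0 1).map (fun u => -1 * u) = gaussianReal 0 1 := by
    rw [gaussianReal_map_const_mul (-1)]
    rw [hone]
    norm_num
  have h1 : ∫ u, erf (c * u + 0) ∂(gaussianReal 0 1)
      = ∫ u, erf (c * (-1 * u) + 0) ∂(gaussianReal 0 1) := by
    conv_lhs => rw [← hmap]
    rw [integral_map (by fun_prop) ]
    exact (erf_aux_cont c 0).aestronglyMeasurable
  have h2 : ∀ u : ℝ, erf (c * (-1 * u) + 0) = - erf (c * u + 0) := by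
    intro u
    rw [show c * (-1 * u) + 0 = -(c * u + 0) by ring, erf_neg]
  simp_rw [h2] at h1
  rw [integral_neg] at h1
  linarith

lemma key (c d : ℝ) :
    ∫ u, erf (c * u + d) ∂(gaussianReal 0 1)
      = erf (d / Real.sqrt (1 + 2 * c ^ 2)) := by
  have hk : (0:ℝ) < 1 + 2 * c ^ 2 := by positivity
  have hG : ∀ x : ℝ, HasDerivAt (fun d => erf (d / Real.sqrt (1 + 2 * c ^ 2)))
      (2 / Real.sqrt Real.pi *
        (Real.exp (-x ^ 2 / (1 + 2 * c ^ 2)) / Real.sqrt (1 + 2 * c ^ 2))) x := by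
    intro x
    have h1 : HasDerivAt (fun d : ℝ => d / Real.sqrt (1 + 2 * c ^ 2))
        (1 / Real.sqrt (1 + 2 * c ^ 2)) x := by
      simpa using (hasDerivAt_id x).div_const (Real.sqrt (1 + 2 * c ^ 2))
    have h2 := (erf_hasDerivAt (x / Real.sqrt (1 + 2 * c ^ 2))).comp x h1
    refine h2.congr_deriv ?_
    rw [div_pow, Real.sq_sqrt hk.le]
    ring
  have main := is_const_of_deriv_eq_zero (f := fun d =>
      (∫ u, erf (c * u + d) ∂(gaussianReal 0 1))
        - erf (d / Real.sqrt (1 + 2 * c ^ 2)))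
    (fun x => ((key_deriv c x).sub (hG x)).differentiableAt)
    (fun x => by have hd := ((key_deriv c x).sub (hG x)).deriv; simp only [Pi.sub_def] at hd; rw [hd]; ring) d 0
  simp only [key_zero c, zero_div, erf_zero, sub_zero] at main
  linarith [main]

/-- The Gaussian integral of the error function:
`∫ erf(a x + b) dN(m, s²)(x) = erf((a m + b)/√(1 + 2 a² s²))`. -/
theorem integral_erf_gaussian (a b m s : ℝ) (hs : 0 < s) :
    ∫ x, erf (a * x + b) ∂(gaussianReal m (s ^ 2).toNNReal)
      = erf ((a * m + b) / Real.sqrt (1 + 2 * a ^ 2 * s ^ 2)) := by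
  have hv : NNReal.mk (s ^ 2) (sq_nonneg _) * 1 = (s ^ 2).toNNReal := by
    ext
    simp [Real.coe_toNNReal _ (sq_nonneg s)]
  have hmap1 : (gaussianReal 0 1).map (fun u => s * u)
      = gaussianReal 0 ((s ^ 2).toNNReal) := by
    rw [gaussianReal_map_const_mul s, hv, mul_zero]
  have hmap2 : (gaussianReal 0 ((s ^ 2).toNNReal)).map (fun u => u + m)
      = gaussianReal m ((s ^ 2).toNNReal) := by
    rw [gaussianReal_map_add_const m, zero_add]
  rw [← hmap2, ← hmap1]
  rw [integral_map (φ := fun u : ℝ => u + m) (f := fun x => erf (a * x + b))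
    (by fun_prop) (erf_aux_cont a b).aestronglyMeasurable]
  rw [integral_map (φ := fun u : ℝ => s * u)
    (f := fun x => erf (a * (x + m) + b)) (by fun_prop)
    (Continuous.aestronglyMeasurable (erf_continuous.comp (by continuity)))]
  have hre : ∀ u : ℝ, erf (a * (s * u + m) + b) = erf ((a * s) * u + (a * m + b)) := by
    intro u; ring_nf
  simp_rw [hre]
  rw [key (a * s) (a * m + b)]
  congr 2
  ring
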